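/- Let n ≥ 1 and work in ℝ^n (EuclideanSpace ℝ (Fin n)). Let J be a symmetric n×n real matrix, g ∈ ℝ^n with g ≠ 0, constants c₁ ≥ 1, c₂ > 0, 0 < τ < 1, and λ ∈ ℝ such that ⟪Jv, v⟫ ≥ λ·‖v‖² for all v. Let μ ∈ ℝ satisfy μ ≥ −c₁·min(0, λ) + c₂·‖g‖, and let d ∈ ℝ^n satisfy ‖(J + μI)d + g‖ ≤ τ·‖g‖ (d is an inexact regularized Newton direction computed by PCG with residual tolerance τ‖g‖). Then ‖d‖ ≤ (τ + 1)/c₂. -/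
import Mathlib


open RealInnerProductSpace

/-- Norm bound on the inexact regularized Newton direction: if `J` is symmetric with
`⟪Jv, v⟫ ≥ λ‖v‖²`, `μ ≥ −c₁·min(0, λ) + c₂‖g‖` and `‖(J + μI)d + g‖ ≤ τ‖g‖`,
then `‖d‖ ≤ (τ + 1)/c₂`. -/
theorem newton_pcg_direction_bound
    (n : ℕ) (hn : 1 ≤ n)
    (J : EuclideanSpace ℝ (Fin n) →ₗ[ℝ] EuclideanSpace ℝ (Fin n))
    (hJsymm : ∀ u v : EuclideanSpace ℝ (Fin n), ⟪J u, v⟫ = ⟪u, J v⟫)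
    (g : EuclideanSpace ℝ (Fin n)) (hg : g ≠ 0)
    (c₁ c₂ τ lam μ : ℝ)
    (hc₁ : 1 ≤ c₁) (hc₂ : 0 < c₂) (hτ0 : 0 < τ) (hτ1 : τ < 1)
    (hlam : ∀ v : EuclideanSpace ℝ (Fin n), lam * ‖v‖ ^ 2 ≤ ⟪J v, v⟫)
    (hμ : -c₁ * min 0 lam + c₂ * ‖g‖ ≤ μ)
    (d : EuclideanSpace ℝ (Fin n))
    (hres : ‖J d + μ • d + g‖ ≤ τ * ‖g‖) :
    ‖d‖ ≤ (τ + 1) / c₂ := by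
  by_cases hd : d = 0
  · have hg' : 0 < ‖g‖ := norm_pos_iff.mpr hg
    rw [hd, norm_zero]
    positivity
  have hdpos : 0 < ‖d‖ := norm_pos_iff.mpr hd
  have hgpos : 0 < ‖g‖ := norm_pos_iff.mpr hg
  set r := J d + μ • d + g with hr
  -- upper bound on ⟪Jd + μd, d⟫
  have h1 : ⟪J d + μ • d, d⟫ ≤ (τ + 1) * ‖g‖ * ‖d‖ := by
    have : J d + μ • d = r - g := by rw [hr]; abel
    rw [this, inner_sub_left]
    have hr1 : ⟪r, d⟫ ≤ ‖r‖ * ‖d‖ := real_inner_le_norm r d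
    have hr2 : -(‖g‖ * ‖d‖) ≤ ⟪g, d⟫ := neg_le_of_abs_le (abs_real_inner_le_norm g d)
    nlinarith [mul_le_mul_of_nonneg_right hres (norm_nonneg d)]
  -- lower bound
  have hmu : c₂ * ‖g‖ ≤ lam + μ := by
    rcases le_or_gt 0 lam with h | h
    · have : min 0 lam = 0 := min_eq_left h
      rw [this] at hμ; linarith
    · have : min 0 lam = lam := min_eq_right h.le
      rw [this] at hμ; nlinarith
  have h2 : c₂ * ‖g‖ * ‖d‖ ^ 2 ≤ ⟪J d + μ • d, d⟫ := by
    rw [inner_add_left, real_inner_smul_left, real_inner_self_eq_norm_sq]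
    have := hlam d
    nlinarith [sq_nonneg ‖d‖]
  have key : c₂ * ‖d‖ ≤ τ + 1 := by
    have := h2.trans h1
    have h3 : c₂ * ‖d‖ * (‖g‖ * ‖d‖) ≤ (τ + 1) * (‖g‖ * ‖d‖) := by nlinarith
    exact le_of_mul_le_mul_right h3 (by positivity)
  rw [le_div_iff₀ hc₂]
  linarith
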